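/- Let a₀, b₀, c₀ > 0 and define, for t > -b₀c₀/a₀ · (2/3), a(t) = a₀^{2/3} b₀^{1/3} c₀^{1/3} ((3/2)t + b₀c₀/a₀)^{-1/3}, b(t) = a₀^{1/3} b₀^{2/3} c₀^{-1/3} ((3/2)t + b₀c₀/a₀)^{1/3}, c(t) = a₀^{1/3} b₀^{-1/3} c₀^{2/3} ((3/2)t + b₀c₀/a₀)^{1/3}. Then (a,b,c) solves the system a' = -a²/(2bc), b' = a/(2c), c' = a/(2b), with a(0)=a₀, b(0)=b₀, c(0)=c₀. -/

import Mathlib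

/-- Explicit solution of the Heisenberg Ricci flow ODE. -/
theorem heisenberg_explicit_solution (a₀ b₀ c₀ : ℝ)
    (ha₀ : 0 < a₀) (hb₀ : 0 < b₀) (hc₀ : 0 < c₀)
    (a b c : ℝ → ℝ)
    (hadef : ∀ t, a t = a₀ ^ ((2:ℝ)/3) * b₀ ^ ((1:ℝ)/3) * c₀ ^ ((1:ℝ)/3) *
      ((3/2) * t + b₀ * c₀ / a₀) ^ (-(1:ℝ)/3))
    (hbdef : ∀ t, b t = a₀ ^ ((1:ℝ)/3) * b₀ ^ ((2:ℝ)/3) * c₀ ^ (-(1:ℝ)/3) *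
      ((3/2) * t + b₀ * c₀ / a₀) ^ ((1:ℝ)/3))
    (hcdef : ∀ t, c t = a₀ ^ ((1:ℝ)/3) * b₀ ^ (-(1:ℝ)/3) * c₀ ^ ((2:ℝ)/3) *
      ((3/2) * t + b₀ * c₀ / a₀) ^ ((1:ℝ)/3)) :
    (a 0 = a₀ ∧ b 0 = b₀ ∧ c 0 = c₀) ∧
    ∀ t, -(2/3) * (b₀ * c₀ / a₀) < t →
      HasDerivAt a (-(a t) ^ 2 / (2 * b t * c t)) t ∧
      HasDerivAt b (a t / (2 * c t)) t ∧
      HasDerivAt c (a t / (2 * b t)) t := by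
  have cube : ∀ x : ℝ, 0 < x → (x ^ ((1:ℝ)/3)) ^ (3:ℕ) = x := by
    intro x hx
    rw [← Real.rpow_natCast (x ^ ((1:ℝ)/3)) 3, ← Real.rpow_mul hx.le]
    norm_num
  have two3 : ∀ x : ℝ, 0 < x → x ^ ((2:ℝ)/3) = (x ^ ((1:ℝ)/3)) ^ (2:ℕ) := by
    intro x hx
    rw [← Real.rpow_natCast (x ^ ((1:ℝ)/3)) 2, ← Real.rpow_mul hx.le]
    norm_num
  have neg3 : ∀ x : ℝ, 0 < x → x ^ (-(1:ℝ)/3) = (x ^ ((1:ℝ)/3))⁻¹ := by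
    intro x hx
    rw [show (-(1:ℝ)/3) = -(1/3) by norm_num, Real.rpow_neg hx.le]
  set A := a₀ ^ ((1:ℝ)/3) with hAdef
  set B := b₀ ^ ((1:ℝ)/3) with hBdef
  set C := c₀ ^ ((1:ℝ)/3) with hCdef
  have hA : 0 < A := Real.rpow_pos_of_pos ha₀ _
  have hB : 0 < B := Real.rpow_pos_of_pos hb₀ _
  have hC : 0 < C := Real.rpow_pos_of_pos hc₀ _
  have hu0 : 0 < b₀ * c₀ / a₀ := by positivity
  have hdiv : (b₀ * c₀ / a₀) ^ ((1:ℝ)/3) = B * C / A := by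
    rw [Real.div_rpow (by positivity) ha₀.le, Real.mul_rpow hb₀.le hc₀.le]
  constructor
  · refine ⟨?_, ?_, ?_⟩
    · have h3 : A ^ (3:ℕ) = a₀ := by rw [hAdef]; exact cube a₀ ha₀
      rw [hadef 0, show (3:ℝ)/2 * 0 + b₀ * c₀ / a₀ = b₀ * c₀ / a₀ by ring,
        two3 a₀ ha₀, neg3 _ hu0, hdiv, ← hAdef]
      field_simp
      linear_combination h3
    · have h3 : B ^ (3:ℕ) = b₀ := by rw [hBdef]; exact cube b₀ hb₀
      rw [hbdef 0, show (3:ℝ)/2 * 0 + b₀ * c₀ / a₀ = b₀ * c₀ / a₀ by ring,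
        two3 b₀ hb₀, neg3 _ hc₀, hdiv, ← hBdef, ← hCdef]
      field_simp
      linear_combination h3
    · have h3 : C ^ (3:ℕ) = c₀ := by rw [hCdef]; exact cube c₀ hc₀
      rw [hcdef 0, show (3:ℝ)/2 * 0 + b₀ * c₀ / a₀ = b₀ * c₀ / a₀ by ring,
        two3 c₀ hc₀, neg3 _ hb₀, hdiv, ← hBdef, ← hCdef]
      field_simp
      linear_combination h3
  · intro t ht
    have hu : 0 < (3:ℝ)/2 * t + b₀ * c₀ / a₀ := by nlinarith
    set u := (3:ℝ)/2 * t + b₀ * c₀ / a₀ with hudef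
    set U := u ^ ((1:ℝ)/3) with hUdef
    have hU : 0 < U := Real.rpow_pos_of_pos hu _
    have hline : HasDerivAt (fun s : ℝ => (3:ℝ)/2 * s + b₀ * c₀ / a₀) ((3:ℝ)/2) t := by
      simpa using ((hasDerivAt_id t).const_mul ((3:ℝ)/2)).add_const (b₀ * c₀ / a₀)
    have hu43 : u ^ (-(1:ℝ)/3 - 1) = (U ^ (4:ℕ))⁻¹ := by
      rw [show (-(1:ℝ)/3 - 1) = -(4/3) by norm_num, Real.rpow_neg hu.le]
      congr 1
      rw [hUdef, ← Real.rpow_natCast (u ^ ((1:ℝ)/3)) 4, ← Real.rpow_mul hu.le]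
      norm_num
    have hu23 : u ^ ((1:ℝ)/3 - 1) = (U ^ (2:ℕ))⁻¹ := by
      rw [show ((1:ℝ)/3 - 1) = -(2/3) by norm_num, Real.rpow_neg hu.le]
      congr 1
      rw [hUdef, ← Real.rpow_natCast (u ^ ((1:ℝ)/3)) 2, ← Real.rpow_mul hu.le]
      norm_num
    refine ⟨?_, ?_, ?_⟩
    · have h1 : HasDerivAt (fun s : ℝ =>
          a₀ ^ ((2:ℝ)/3) * b₀ ^ ((1:ℝ)/3) * c₀ ^ ((1:ℝ)/3) *
            ((3:ℝ)/2 * s + b₀ * c₀ / a₀) ^ (-(1:ℝ)/3))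
          (a₀ ^ ((2:ℝ)/3) * b₀ ^ ((1:ℝ)/3) * c₀ ^ ((1:ℝ)/3) *
            ((3:ℝ)/2 * (-(1:ℝ)/3) * u ^ (-(1:ℝ)/3 - 1))) t :=
        (hline.rpow_const (Or.inl hu.ne')).const_mul _
      have hfun : a = fun s : ℝ =>
          a₀ ^ ((2:ℝ)/3) * b₀ ^ ((1:ℝ)/3) * c₀ ^ ((1:ℝ)/3) *
            ((3:ℝ)/2 * s + b₀ * c₀ / a₀) ^ (-(1:ℝ)/3) := funext hadef
      have h2 : HasDerivAt a
          (a₀ ^ ((2:ℝ)/3) * b₀ ^ ((1:ℝ)/3) * c₀ ^ ((1:ℝ)/3) *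
            ((3:ℝ)/2 * (-(1:ℝ)/3) * u ^ (-(1:ℝ)/3 - 1))) t := by
        rw [hfun]; exact h1
      convert h2 using 1
      rw [hadef t, hbdef t, hcdef t, ← hudef, two3 a₀ ha₀, two3 b₀ hb₀, two3 c₀ hc₀,
        neg3 _ hc₀, neg3 _ hb₀, neg3 _ hu, hu43, ← hAdef, ← hBdef, ← hCdef, ← hUdef]
      field_simp
    · have h1 : HasDerivAt (fun s : ℝ =>
          a₀ ^ ((1:ℝ)/3) * b₀ ^ ((2:ℝ)/3) * c₀ ^ (-(1:ℝ)/3) *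
            ((3:ℝ)/2 * s + b₀ * c₀ / a₀) ^ ((1:ℝ)/3))
          (a₀ ^ ((1:ℝ)/3) * b₀ ^ ((2:ℝ)/3) * c₀ ^ (-(1:ℝ)/3) *
            ((3:ℝ)/2 * ((1:ℝ)/3) * u ^ ((1:ℝ)/3 - 1))) t :=
        (hline.rpow_const (Or.inl hu.ne')).const_mul _
      have hfun : b = fun s : ℝ =>
          a₀ ^ ((1:ℝ)/3) * b₀ ^ ((2:ℝ)/3) * c₀ ^ (-(1:ℝ)/3) *
            ((3:ℝ)/2 * s + b₀ * c₀ / a₀) ^ ((1:ℝ)/3) := funext hbdef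
      have h2 : HasDerivAt b
          (a₀ ^ ((1:ℝ)/3) * b₀ ^ ((2:ℝ)/3) * c₀ ^ (-(1:ℝ)/3) *
            ((3:ℝ)/2 * ((1:ℝ)/3) * u ^ ((1:ℝ)/3 - 1))) t := by
        rw [hfun]; exact h1
      convert h2 using 1
      rw [hadef t, hcdef t, ← hudef, two3 a₀ ha₀, two3 b₀ hb₀, two3 c₀ hc₀,
        neg3 _ hc₀, neg3 _ hb₀, neg3 _ hu, hu23, ← hAdef, ← hBdef, ← hCdef, ← hUdef]
      field_simp
    · have h1 : HasDerivAt (fun s : ℝ =>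
          a₀ ^ ((1:ℝ)/3) * b₀ ^ (-(1:ℝ)/3) * c₀ ^ ((2:ℝ)/3) *
            ((3:ℝ)/2 * s + b₀ * c₀ / a₀) ^ ((1:ℝ)/3))
          (a₀ ^ ((1:ℝ)/3) * b₀ ^ (-(1:ℝ)/3) * c₀ ^ ((2:ℝ)/3) *
            ((3:ℝ)/2 * ((1:ℝ)/3) * u ^ ((1:ℝ)/3 - 1))) t :=
        (hline.rpow_const (Or.inl hu.ne')).const_mul _
      have hfun : c = fun s : ℝ =>
          a₀ ^ ((1:ℝ)/3) * b₀ ^ (-(1:ℝ)/3) * c₀ ^ ((2:ℝ)/3) *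
            ((3:ℝ)/2 * s + b₀ * c₀ / a₀) ^ ((1:ℝ)/3) := funext hcdef
      have h2 : HasDerivAt c
          (a₀ ^ ((1:ℝ)/3) * b₀ ^ (-(1:ℝ)/3) * c₀ ^ ((2:ℝ)/3) *
            ((3:ℝ)/2 * ((1:ℝ)/3) * u ^ ((1:ℝ)/3 - 1))) t := by
        rw [hfun]; exact h1
      convert h2 using 1
      rw [hadef t, hbdef t, ← hudef, two3 a₀ ha₀, two3 b₀ hb₀, two3 c₀ hc₀,
        neg3 _ hc₀, neg3 _ hb₀, neg3 _ hu, hu23, ← hAdef, ← hBdef, ← hCdef, ← hUdef]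
      field_simp
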